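/- Let C > 0, θ ∈ [0,1], and p = 1/2. Then the conditional risk R is constant equal to (2−θ)√C on the interval [−1/√C, 1/√C], and every f ∈ [−1/√C, 1/√C] is a global minimizer of R over ℝ. -/
import Mathlib


/-- The DWD loss with parameter `C`. -/
noncomputable def dwdLoss (C u : ℝ) : ℝ :=
  if u ≤ 1 / Real.sqrt C then 2 * Real.sqrt C - C * u else 1 / u

/-- The FLAME loss with parameters `C` and `θ`. -/
noncomputable def flameLoss (C θ u : ℝ) : ℝ :=
  max (dwdLoss C u - θ * Real.sqrt C) 0

/-- The conditional risk `R(f) = p·L(f,θ) + (1−p)·L(−f,θ)`. -/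
noncomputable def condRisk (C θ p f : ℝ) : ℝ :=
  p * flameLoss C θ f + (1 - p) * flameLoss C θ (-f)

lemma condRisk_symm (C θ g : ℝ) :
    condRisk C θ (1 / 2) (-g) = condRisk C θ (1 / 2) g := by
  unfold condRisk
  rw [neg_neg]
  ring

lemma flameLoss_of_le (C θ u : ℝ) (hC : 0 < C) (hθ1 : θ ≤ 1)
    (hu : u ≤ 1 / Real.sqrt C) :
    flameLoss C θ u = 2 * Real.sqrt C - C * u - θ * Real.sqrt C := by
  have hspos : 0 < Real.sqrt C := Real.sqrt_pos.mpr hC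
  have hss : Real.sqrt C * Real.sqrt C = C := Real.mul_self_sqrt hC.le
  have hCu : C * u ≤ Real.sqrt C := by
    have h1 : u * Real.sqrt C ≤ 1 := by
      have := (le_div_iff₀ hspos).mp hu
      linarith
    nlinarith
  unfold flameLoss dwdLoss
  rw [if_pos hu, max_eq_left (by nlinarith)]

lemma condRisk_inside (C θ : ℝ) (hC : 0 < C) (hθ0 : 0 ≤ θ) (hθ1 : θ ≤ 1)
    (f : ℝ) (hf : f ∈ Set.Icc (-(1 / Real.sqrt C)) (1 / Real.sqrt C)) :
    condRisk C θ (1 / 2) f = (2 - θ) * Real.sqrt C := by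
  obtain ⟨hf1, hf2⟩ := hf
  have hnf : -f ≤ 1 / Real.sqrt C := by linarith
  unfold condRisk
  rw [flameLoss_of_le C θ f hC hθ1 hf2, flameLoss_of_le C θ (-f) hC hθ1 hnf]
  ring

lemma condRisk_outside (C θ : ℝ) (hC : 0 < C) (hθ0 : 0 ≤ θ) (hθ1 : θ ≤ 1)
    (g : ℝ) (hg : 1 / Real.sqrt C < g) :
    (2 - θ) * Real.sqrt C ≤ condRisk C θ (1 / 2) g := by
  have hspos : 0 < Real.sqrt C := Real.sqrt_pos.mpr hC
  have hss : Real.sqrt C * Real.sqrt C = C := Real.mul_self_sqrt hC.le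
  have hgpos : 0 < g := lt_trans (by positivity) hg
  have hng : -g ≤ 1 / Real.sqrt C := by
    have : (0:ℝ) < 1 / Real.sqrt C := by positivity
    linarith
  have hCg : Real.sqrt C < C * g := by
    have h1 : 1 < g * Real.sqrt C := by
      have := (div_lt_iff₀ hspos).mp hg
      linarith
    nlinarith
  have hL2 : flameLoss C θ (-g) = 2 * Real.sqrt C - C * (-g) - θ * Real.sqrt C :=
    flameLoss_of_le C θ (-g) hC hθ1 hng
  have hL1 : flameLoss C θ g = max (1 / g - θ * Real.sqrt C) 0 := by
    unfold flameLoss dwdLoss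
    rw [if_neg (not_le.mpr hg)]
  unfold condRisk
  rw [hL1, hL2]
  rcases le_or_gt (θ * Real.sqrt C) (1 / g) with h | h
  · rw [max_eq_left (by linarith)]
    have hinv : 2 * Real.sqrt C ≤ 1 / g + C * g := by
      rw [← sub_nonneg]
      have heq : 1 / g + C * g - 2 * Real.sqrt C = (Real.sqrt C * g - 1) ^ 2 / g := by
        field_simp
        linear_combination (-(g * g)) * hss
      rw [heq]
      positivity
    nlinarith
  · rw [max_eq_right (by linarith)]
    have h1 : 1 < θ * Real.sqrt C * g := by
      have := (div_lt_iff₀ hgpos).mp h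
      nlinarith
    have hθpos : 0 < θ := by nlinarith [mul_pos hspos hgpos]
    have h2 : Real.sqrt C < θ * (C * g) := by nlinarith
    nlinarith [sq_nonneg (θ - 1), mul_pos hθpos hspos]

theorem condRisk_constant_at_half (C θ : ℝ) (hC : 0 < C) (hθ : θ ∈ Set.Icc (0 : ℝ) 1) :
    (∀ f ∈ Set.Icc (-(1 / Real.sqrt C)) (1 / Real.sqrt C),
      condRisk C θ (1 / 2) f = (2 - θ) * Real.sqrt C) ∧
    (∀ f ∈ Set.Icc (-(1 / Real.sqrt C)) (1 / Real.sqrt C),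
      ∀ g : ℝ, condRisk C θ (1 / 2) f ≤ condRisk C θ (1 / 2) g) := by
  obtain ⟨hθ0, hθ1⟩ := hθ
  refine ⟨fun f hf => condRisk_inside C θ hC hθ0 hθ1 f hf, fun f hf g => ?_⟩
  rw [condRisk_inside C θ hC hθ0 hθ1 f hf]
  rcases le_or_gt g (1 / Real.sqrt C) with h1 | h1
  · rcases le_or_gt (-(1 / Real.sqrt C)) g with h2 | h2
    · rw [condRisk_inside C θ hC hθ0 hθ1 g ⟨h2, h1⟩]
    · rw [← condRisk_symm]
      exact condRisk_outside C θ hC hθ0 hθ1 (-g) (by linarith)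
  · exact condRisk_outside C θ hC hθ0 hθ1 g h1
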